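/- Define c(v) = (1/2)·[((λ₂/√2)^{n-1})·λ₁^{2|v|} + ((λ₁/√2)^{n-1})·λ₂^{2|v|}] for v ∈ ℤ₂ⁿ, with λ₁ = e^{iπ/4}, λ₂ = e^{-iπ/4}. Then Σ_{v ∈ ℤ₂ⁿ, vₙ = 1} c(v) · (((-i)^{|v|} + i^{|v|})/2) = ((√2·λ₁)^{n-1} + (√2·λ₂)^{n-1})/4 for every n ≥ 2. -/
import Mathlib


open Complex Finset

lemma sum_pow_weight (m : ℕ) (x : ℂ) :
    ∑ v : Fin m → Fin 2, x ^ (∑ i, (v i : ℕ)) = (1 + x) ^ m := by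
  simp_rw [← Finset.prod_pow_eq_pow_sum]
  rw [← Fintype.piFinset_univ,
    ← Finset.prod_univ_sum (t := fun _ : Fin m => (univ : Finset (Fin 2)))
      (f := fun _ j => x ^ (j : ℕ))]
  simp [Fin.sum_univ_succ]


/-- With `c(v) = (1/2)[(λ₂/√2)^{n-1} λ₁^{2|v|} + (λ₁/√2)^{n-1} λ₂^{2|v|}]`,
the sum of `c(v)·((-i)^{|v|}+i^{|v|})/2` over all `v ∈ ℤ₂ⁿ` with last coordinate `1`
equals `((√2 λ₁)^{n-1} + (√2 λ₂)^{n-1})/4`, for every `n ≥ 2`. -/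
theorem stmt9 (n : ℕ) (hn : 2 ≤ n) :
    let lam1 : ℂ := (1 + I) / (Real.sqrt 2 : ℂ)
    let lam2 : ℂ := (1 - I) / (Real.sqrt 2 : ℂ)
    let c : (Fin n → Fin 2) → ℂ := fun v =>
      (1 / 2) * ((lam2 / (Real.sqrt 2 : ℂ)) ^ (n - 1) * lam1 ^ (2 * ∑ i, (v i : ℕ)) +
        (lam1 / (Real.sqrt 2 : ℂ)) ^ (n - 1) * lam2 ^ (2 * ∑ i, (v i : ℕ)))
    ∑ v ∈ Finset.univ.filter (fun v : Fin n → Fin 2 => v ⟨n - 1, by omega⟩ = 1),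
        c v * (((-I) ^ (∑ i, (v i : ℕ)) + I ^ (∑ i, (v i : ℕ))) / 2) =
      (((Real.sqrt 2 : ℂ) * lam1) ^ (n - 1) + ((Real.sqrt 2 : ℂ) * lam2) ^ (n - 1)) / 4 := by
  intro lam1 lam2 c
  obtain ⟨m, rfl⟩ : ∃ m, n = m + 1 := ⟨n - 1, by omega⟩
  have hm : 1 ≤ m := by omega
  have hsqrt2 : ((Real.sqrt 2 : ℝ) : ℂ) ^ 2 = 2 := by
    rw [← Complex.ofReal_pow, Real.sq_sqrt (by norm_num : (2:ℝ) ≥ 0)]; norm_num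
  have hs0 : ((Real.sqrt 2 : ℝ) : ℂ) ≠ 0 := by
    intro h; rw [h] at hsqrt2; simp at hsqrt2
  have hl1 : lam1 ^ 2 = I := by
    show ((1 + I) / _) ^ 2 = I
    rw [div_pow, hsqrt2]
    ring_nf
    rw [Complex.I_sq]; ring
  have hl2 : lam2 ^ 2 = -I := by
    show ((1 - I) / _) ^ 2 = -I
    rw [div_pow, hsqrt2]
    ring_nf
    rw [Complex.I_sq]; ring
  have hdiv : ∀ x : ℂ, 2 * (x / (Real.sqrt 2 : ℂ)) = (Real.sqrt 2 : ℂ) * x := by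
    intro x
    rw [← hsqrt2, sq, mul_assoc, mul_comm ((Real.sqrt 2 : ℝ) : ℂ) (x / _),
      div_mul_cancel₀ x hs0]
  set A : ℂ := (lam2 / (Real.sqrt 2 : ℂ)) ^ (m + 1 - 1) with hA
  set B : ℂ := (lam1 / (Real.sqrt 2 : ℂ)) ^ (m + 1 - 1) with hB
  have hbij : ∑ v ∈ Finset.univ.filter (fun v : Fin (m+1) → Fin 2 => v ⟨m + 1 - 1, by omega⟩ = 1),
        c v * (((-I) ^ (∑ i, (v i : ℕ)) + I ^ (∑ i, (v i : ℕ))) / 2)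
      = ∑ w : Fin m → Fin 2,
        c (Fin.snoc w 1) * (((-I) ^ (∑ i, ((Fin.snoc w 1 : Fin (m+1) → Fin 2) i : ℕ))
          + I ^ (∑ i, ((Fin.snoc w 1 : Fin (m+1) → Fin 2) i : ℕ))) / 2) := by
    refine Finset.sum_bij' (fun (v : Fin (m+1) → Fin 2) (_ : v ∈ _) => Fin.init v)
      (fun (w : Fin m → Fin 2) (_ : w ∈ univ) => Fin.snoc w 1) ?_ ?_ ?_ ?_ ?_
    · intro v hv; exact mem_univ _
    · intro w hw
      simp only [mem_filter, mem_univ, true_and]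
      show (Fin.snoc w 1 : Fin (m+1) → Fin 2) (Fin.last m) = 1
      exact Fin.snoc_last _ _
    · intro v hv
      simp only [mem_filter, mem_univ, true_and] at hv
      have hv' : v (Fin.last m) = 1 := hv
      show (Fin.snoc (Fin.init v) 1 : Fin (m+1) → Fin 2) = v
      rw [← hv', Fin.snoc_init_self]
    · intro w hw
      exact Fin.init_snoc _ _
    · intro v hv
      simp only [mem_filter, mem_univ, true_and] at hv
      have hv' : v (Fin.last m) = 1 := hv
      have hvv : (Fin.snoc (Fin.init v) 1 : Fin (m+1) → Fin 2) = v := by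
        rw [← hv', Fin.snoc_init_self]
      rw [hvv]
  rw [hbij]
  have hsum : ∀ w : Fin m → Fin 2,
      (∑ i, ((Fin.snoc w 1 : Fin (m+1) → Fin 2) i : ℕ)) = (∑ i, (w i : ℕ)) + 1 := by
    intro w
    rw [Fin.sum_univ_castSucc]
    simp [Fin.snoc_castSucc, Fin.snoc_last]
  have hterm : ∀ w : Fin m → Fin 2,
      c (Fin.snoc w 1) * (((-I) ^ (∑ i, ((Fin.snoc w 1 : Fin (m+1) → Fin 2) i : ℕ))
          + I ^ (∑ i, ((Fin.snoc w 1 : Fin (m+1) → Fin 2) i : ℕ))) / 2)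
      = (A + B) / 4 * ((1:ℂ) ^ (∑ i, (w i : ℕ)) - (-1:ℂ) ^ (∑ i, (w i : ℕ))) := by
    intro w
    have hk := hsum w
    set k := ∑ i, (w i : ℕ) with hkdef
    show (1 / 2) * (A * lam1 ^ (2 * ∑ i, ((Fin.snoc w 1 : Fin (m+1) → Fin 2) i : ℕ)) +
        B * lam2 ^ (2 * ∑ i, ((Fin.snoc w 1 : Fin (m+1) → Fin 2) i : ℕ))) *
        (((-I) ^ (∑ i, ((Fin.snoc w 1 : Fin (m+1) → Fin 2) i : ℕ))
          + I ^ (∑ i, ((Fin.snoc w 1 : Fin (m+1) → Fin 2) i : ℕ))) / 2)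
      = (A + B) / 4 * ((1:ℂ) ^ k - (-1:ℂ) ^ k)
    rw [hk]
    rw [pow_mul, pow_mul, hl1, hl2]
    have e1 : I ^ (k+1) * (-I) ^ (k+1) = 1 := by
      rw [← mul_pow]; simp
    have e2 : I ^ (k+1) * I ^ (k+1) = (-1 : ℂ) ^ (k+1) := by
      rw [← pow_add, ← two_mul, pow_mul, Complex.I_sq]
    have e3 : (-I) ^ (k+1) * (-I) ^ (k+1) = (-1 : ℂ) ^ (k+1) := by
      rw [← pow_add, ← two_mul, pow_mul]; norm_num [Complex.I_sq]
    have expand : (1 / 2 : ℂ) * (A * I ^ (k+1) + B * (-I) ^ (k+1)) * (((-I) ^ (k+1) + I ^ (k+1)) / 2)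
        = (A * (I ^ (k+1) * (-I) ^ (k+1)) + A * (I ^ (k+1) * I ^ (k+1))
          + B * ((-I) ^ (k+1) * (-I) ^ (k+1)) + B * (I ^ (k+1) * (-I) ^ (k+1))) / 4 := by
      ring
    rw [expand, e1, e2, e3, pow_succ]
    ring
  simp_rw [hterm]
  rw [← Finset.mul_sum, Finset.sum_sub_distrib, sum_pow_weight, sum_pow_weight]
  have h20 : ((1:ℂ) + -1) ^ m = 0 := by
    rw [show ((1:ℂ) + -1) = 0 from by ring]
    exact zero_pow (by omega)
  rw [h20]
  have hA2 : (2:ℂ) ^ m * A = ((Real.sqrt 2 : ℂ) * lam2) ^ (m + 1 - 1) := by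
    rw [hA]
    simp only [Nat.add_sub_cancel]
    rw [← mul_pow]
    congr 1
    exact hdiv lam2
  have hB2 : (2:ℂ) ^ m * B = ((Real.sqrt 2 : ℂ) * lam1) ^ (m + 1 - 1) := by
    rw [hB]
    simp only [Nat.add_sub_cancel]
    rw [← mul_pow]
    congr 1
    exact hdiv lam1
  simp only [Nat.add_sub_cancel] at hA2 hB2 ⊢
  norm_num
  linear_combination hA2 / 4 + hB2 / 4
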